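/- Let μ₂ ∈ ℝ, c₁ > 0, c₂ ≥ 0 and γ ∈ (0,1]. Set ρ₁* := c₁γ + c₂√γ + 1 and ρ₂* := c₂ + c₁√γ. Then ρ₁* > 0, ρ₂* > 0, c₂/ρ₂* < 1, 1 − c₂/ρ₂* − γ·c₁/ρ₁* > 0, and 2μ₂ + c₁ρ₁* + c₂ρ₂* + (c₁/ρ₁*)·(1 − c₂/ρ₂*)/(1 − c₂/ρ₂* − γ·c₁/ρ₁*) = 2μ₂ + 2c₁ + 2c₁c₂√γ + c₁²γ + c₂². -/

import Mathlib

/-- Remark 3.1 (attainment half): the global minimum of the lower bound for λ in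
condition (3.3) over the feasibility region of condition (3.2) is attained at the
critical point `ρ₁* = c₁γ + c₂√γ + 1`, `ρ₂* = c₂ + c₁√γ`, which is feasible. -/
theorem stmt_1 (μ₂ c₁ c₂ γ : ℝ) (hc₁ : 0 < c₁) (hc₂ : 0 ≤ c₂)
    (hγ0 : 0 < γ) (hγ1 : γ ≤ 1) :
    0 < c₁ * γ + c₂ * Real.sqrt γ + 1 ∧
    0 < c₂ + c₁ * Real.sqrt γ ∧
    c₂ / (c₂ + c₁ * Real.sqrt γ) < 1 ∧
    0 < 1 - c₂ / (c₂ + c₁ * Real.sqrt γ) -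
        γ * c₁ / (c₁ * γ + c₂ * Real.sqrt γ + 1) ∧
    2 * μ₂ + c₁ * (c₁ * γ + c₂ * Real.sqrt γ + 1) + c₂ * (c₂ + c₁ * Real.sqrt γ) +
        (c₁ / (c₁ * γ + c₂ * Real.sqrt γ + 1)) *
          (1 - c₂ / (c₂ + c₁ * Real.sqrt γ)) /
          (1 - c₂ / (c₂ + c₁ * Real.sqrt γ) -
            γ * c₁ / (c₁ * γ + c₂ * Real.sqrt γ + 1)) =
      2 * μ₂ + 2 * c₁ + 2 * c₁ * c₂ * Real.sqrt γ + c₁ ^ 2 * γ + c₂ ^ 2 := by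
  set s := Real.sqrt γ with hs
  have hs0 : 0 < s := Real.sqrt_pos.mpr hγ0
  have hs2 : s ^ 2 = γ := Real.sq_sqrt hγ0.le
  have hρ1 : 0 < c₁ * γ + c₂ * s + 1 := by positivity
  have hρ2 : 0 < c₂ + c₁ * s := by positivity
  refine ⟨hρ1, hρ2, ?_, ?_, ?_⟩
  · rw [div_lt_one hρ2]; nlinarith [mul_pos hc₁ hs0]
  · have h1 : 1 - c₂ / (c₂ + c₁ * s) = c₁ * s / (c₂ + c₁ * s) := by
      field_simp; ring
    rw [h1]
    rw [sub_pos, div_lt_div_iff₀ hρ1 hρ2, ← hs2]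
    nlinarith [mul_pos hc₁ hs0, mul_pos (mul_pos hc₁ hs0) hρ2, sq_nonneg s,
      mul_pos hρ2 hs0]
  · have h1 : 1 - c₂ / (c₂ + c₁ * s) - γ * c₁ / (c₁ * γ + c₂ * s + 1)
        = c₁ * s / ((c₂ + c₁ * s) * (c₁ * γ + c₂ * s + 1)) := by
      rw [← hs2]
      field_simp
      ring
    have h2 : 1 - c₂ / (c₂ + c₁ * s) = c₁ * s / (c₂ + c₁ * s) := by field_simp; ring
    rw [h1, h2]
    have hne : c₁ * s ≠ 0 := by positivity
    rw [← hs2]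
    field_simp
    ring
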